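/- arXiv:2602.13025 — 3 statements merged into one kernel-verified Lean document; each statement's English description precedes it below -/
import Mathlib

section
/- For any two nonempty compact sets A, B in ℝⁿ, the n-th root of the volume of the Minkowski sum A + B is at least the sum of the n-th roots of the volumes of A and B: Vol(A+B)^(1/n) ≥ Vol(A)^(1/n) + Vol(B)^(1/n). -/
open MeasureTheory Pointwise

section BrunnMinkowskiAux

open ENNReal


lemma compact_add_meas (K L : Set ℝ) (hK : IsCompact K) (hL : IsCompact L)
    (hKne : K.Nonempty) (hLne : L.Nonempty) :
    volume K + volume L ≤ volume (K + L) := by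
  set m := sInf K with hm
  set M := sSup L with hM
  have hmK : m ∈ K := hK.sInf_mem hKne
  have hML : M ∈ L := hL.sSup_mem hLne
  have h1 : K + {M} ⊆ K + L := Set.add_subset_add_left (by simpa using hML)
  have h2 : {m} + L ⊆ K + L := Set.add_subset_add_right (by simpa using hmK)
  have hsub : (K + {M}) ∩ ({m} + L) ⊆ {m + M} := by
    rintro x ⟨⟨k, hk, a, ha, rfl⟩, ⟨b, hb, l, hl, hx⟩⟩
    simp only [Set.mem_singleton_iff] at ha hb
    subst ha; subst hb
    simp only at hx
    have h1 : m ≤ k := csInf_le hK.bddBelow hk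
    have h2 : l ≤ M := le_csSup hL.bddAbove hl
    have : k + M = m + M := by linarith
    simp [this]
  have hmeas : MeasurableSet (K + {M}) := (hK.add isCompact_singleton).measurableSet
  have key : volume ((K + {M}) ∪ ({m} + L)) = volume (K + {M}) + volume ({m} + L) := by
    have h := measure_union_add_inter (μ := volume) ({m} + L) hmeas
    have hz : volume ((K + {M}) ∩ ({m} + L)) = 0 :=
      measure_mono_null hsub (measure_singleton _)
    rw [Set.union_comm, Set.inter_comm, hz, add_zero] at h
    exact h.trans (add_comm _ _)
  calc volume K + volume L = volume (K + {M}) + volume ({m} + L) := by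
        simp [Set.add_singleton, Set.singleton_add]
    _ = volume ((K + {M}) ∪ ({m} + L)) := key.symm
    _ ≤ volume (K + L) := measure_mono (Set.union_subset h1 h2)

lemma meas_add_meas (S T : Set ℝ) (hS : MeasurableSet S) (hT : MeasurableSet T)
    (hSne : S.Nonempty) (hTne : T.Nonempty) :
    volume S + volume T ≤ volume (S + T) := by
  have hT1 : ∀ L : Set ℝ, L ⊆ T → volume L ≤ volume (S + T) := fun L hLT =>
    calc volume L = volume ({hSne.some} + L) := by simp [Set.singleton_add]
      _ ≤ volume (S + T) := measure_mono (Set.add_subset_add (by simpa using hSne.some_mem) hLT)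
  have hS1 : ∀ K : Set ℝ, K ⊆ S → volume K ≤ volume (S + T) := fun K hKS =>
    calc volume K = volume (K + {hTne.some}) := by simp [Set.add_singleton]
      _ ≤ volume (S + T) := measure_mono (Set.add_subset_add hKS (by simpa using hTne.some_mem))
  rw [hS.measure_eq_iSup_isCompact, hT.measure_eq_iSup_isCompact]
  refine ENNReal.iSup_add_iSup_le fun K L => ?_
  by_cases hKS : K ⊆ S; swap
  · simp only [hKS, not_false_iff, iSup_false, iSup_of_empty', bot_eq_zero, zero_add]
    simpa [sSup_empty] using iSup_le fun hLT => iSup_le fun _ : IsCompact L => hT1 L hLT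
  by_cases hKc : IsCompact K; swap
  · simp only [hKS, iSup_pos, hKc, not_false_iff, iSup_false, iSup_of_empty', bot_eq_zero, zero_add]
    simpa [sSup_empty] using iSup_le fun hLT => iSup_le fun _ : IsCompact L => hT1 L hLT
  by_cases hLT : L ⊆ T; swap
  · simp only [hKS, hKc, iSup_pos, hLT, not_false_iff, iSup_false, iSup_of_empty', bot_eq_zero, add_zero]
    simpa [sSup_empty] using hS1 K hKS
  by_cases hLc : IsCompact L; swap
  · simp only [hKS, hKc, hLT, iSup_pos, hLc, not_false_iff, iSup_false, iSup_of_empty', bot_eq_zero, add_zero]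
    simpa [sSup_empty] using hS1 K hKS
  simp only [hKS, hKc, hLT, hLc, iSup_pos]
  rcases K.eq_empty_or_nonempty with rfl | hKne
  · simp only [measure_empty, zero_add]
    calc volume L ≤ volume ({hSne.some} + L) := by simp [Set.singleton_add]
      _ ≤ volume (S + T) := measure_mono (Set.add_subset_add (by simpa using hSne.some_mem) hLT)
  rcases L.eq_empty_or_nonempty with rfl | hLne
  · simp only [measure_empty, add_zero]
    calc volume K ≤ volume (K + {hTne.some}) := by simp [Set.add_singleton]
      _ ≤ volume (S + T) := measure_mono (Set.add_subset_add hKS (by simpa using hTne.some_mem))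
  calc volume K + volume L ≤ volume (K + L) := compact_add_meas K L hKc hLc hKne hLne
    _ ≤ volume (S + T) := measure_mono (Set.add_subset_add hKS hLT)

/-- Core 1-D lemma, normalized form: if `f, g ≤ 1` with supremum `1`, then
`∫f + ∫g ≤ ∫h`. -/
lemma dim1_core {t : ℝ} (ht : 0 < t) (ht1 : t < 1) (f g h : ℝ → ℝ≥0∞)
    (hf : Measurable f) (hg : Measurable g) (hh : Measurable h)
    (hf1 : ∀ x, f x ≤ 1) (hg1 : ∀ x, g x ≤ 1)
    (hfs : ∀ l : ℝ≥0∞, l < 1 → ∃ x, l < f x) (hgs : ∀ l : ℝ≥0∞, l < 1 → ∃ x, l < g x)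
    (hle : ∀ x y, f x ^ (1 - t) * g y ^ t ≤ h (x + y)) :
    (∫⁻ x, f x) + ∫⁻ x, g x ≤ ∫⁻ x, h x := by
  -- real-valued versions
  set fr := fun x => (f x).toReal with hfr
  set gr := fun x => (g x).toReal with hgr
  set hr := fun x => (min (h x) 1).toReal with hhr
  have hfrm : Measurable fr := hf.ennreal_toReal
  have hgrm : Measurable gr := hg.ennreal_toReal
  have hhrm : Measurable hr := (hh.min measurable_const).ennreal_toReal
  have hfne : ∀ x, f x ≠ ⊤ := fun x => ((hf1 x).trans_lt one_lt_top).ne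
  have hgne : ∀ x, g x ≠ ⊤ := fun x => ((hg1 x).trans_lt one_lt_top).ne
  have hhne : ∀ x, min (h x) 1 ≠ ⊤ := fun x => ((min_le_right _ _).trans_lt one_lt_top).ne
  have hfr1 : ∀ x, fr x ≤ 1 := fun x => by
    simpa using ENNReal.toReal_mono one_ne_top (hf1 x)
  have hgr1 : ∀ x, gr x ≤ 1 := fun x => by
    simpa using ENNReal.toReal_mono one_ne_top (hg1 x)
  -- layer cake representations
  have hfl : ∫⁻ x, f x = ∫⁻ l in Set.Ioi 0, volume {x | l < fr x} := by
    rw [← lintegral_eq_lintegral_meas_lt volume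
      (Filter.Eventually.of_forall fun x => ENNReal.toReal_nonneg) hfrm.aemeasurable]
    exact lintegral_congr fun x => (ENNReal.ofReal_toReal (hfne x)).symm
  have hgl : ∫⁻ x, g x = ∫⁻ l in Set.Ioi 0, volume {x | l < gr x} := by
    rw [← lintegral_eq_lintegral_meas_lt volume
      (Filter.Eventually.of_forall fun x => ENNReal.toReal_nonneg) hgrm.aemeasurable]
    exact lintegral_congr fun x => (ENNReal.ofReal_toReal (hgne x)).symm
  have hhl : ∫⁻ l in Set.Ioi 0, volume {x | l ≤ hr x} ≤ ∫⁻ x, h x := by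
    rw [← lintegral_eq_lintegral_meas_le volume
      (Filter.Eventually.of_forall fun x => ENNReal.toReal_nonneg) hhrm.aemeasurable]
    refine lintegral_mono fun x => ?_
    rw [ENNReal.ofReal_toReal (hhne x)]
    exact min_le_left _ _
  -- restrict f, g integrals to (0,1)
  have hrest : ∀ (u : ℝ → ℝ) (_ : ∀ x, u x ≤ 1),
      ∫⁻ l in Set.Ioi 0, volume {x | l < u x} ≤ ∫⁻ l in Set.Ioo 0 1, volume {x | l < u x} := by
    intro u hu1
    have hsplit : Set.Ioi (0:ℝ) ⊆ Set.Ioo 0 1 ∪ Set.Ici 1 := by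
      intro l hl
      rcases lt_or_ge l 1 with h' | h'
      · exact Or.inl ⟨hl, h'⟩
      · exact Or.inr h'
    calc ∫⁻ l in Set.Ioi 0, volume {x | l < u x}
        ≤ ∫⁻ l in Set.Ioo 0 1 ∪ Set.Ici 1, volume {x | l < u x} :=
          lintegral_mono_set hsplit
      _ ≤ (∫⁻ l in Set.Ioo 0 1, volume {x | l < u x})
          + ∫⁻ l in Set.Ici 1, volume {x | l < u x} := lintegral_union_le _ _ _
      _ = ∫⁻ l in Set.Ioo 0 1, volume {x | l < u x} := by
          have hz : ∀ l ∈ Set.Ici (1:ℝ), volume {x | l < u x} = 0 := by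
            intro l hl
            have : {x | l < u x} = ∅ := by
              ext x; simp only [Set.mem_setOf_eq, Set.mem_empty_iff_false, iff_false, not_lt]
              exact (hu1 x).trans hl
            simp [this]
          have hz2 : ∫⁻ l in Set.Ici (1:ℝ), volume {x | l < u x} = 0 :=
            le_antisymm ((setLIntegral_mono' measurableSet_Ici
                (fun l hl => le_of_eq (hz l hl))).trans (by simp)) (zero_le)
          rw [hz2, add_zero]
  -- pointwise inequality on (0,1)
  have hkey : ∀ l ∈ Set.Ioo (0:ℝ) 1,
      volume {x | l < fr x} + volume {x | l < gr x} ≤ volume {x | l ≤ hr x} := by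
    rintro l ⟨hl0, hl1⟩
    set S := {x | ENNReal.ofReal l < f x} with hS
    set T := {x | ENNReal.ofReal l < g x} with hT
    have hSeq : {x | l < fr x} = S := by
      ext x; simp only [Set.mem_setOf_eq, hS, hfr]
      exact (ENNReal.ofReal_lt_iff_lt_toReal hl0.le (hfne x)).symm
    have hTeq : {x | l < gr x} = T := by
      ext x; simp only [Set.mem_setOf_eq, hT, hgr]
      exact (ENNReal.ofReal_lt_iff_lt_toReal hl0.le (hgne x)).symm
    have hl1' : ENNReal.ofReal l < 1 := by
      rw [← ENNReal.ofReal_one]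
      exact ENNReal.ofReal_lt_ofReal_iff_of_nonneg hl0.le |>.mpr hl1
    have hSne : S.Nonempty := hfs _ hl1'
    have hTne : T.Nonempty := hgs _ hl1'
    have hSm : MeasurableSet S := hf measurableSet_Ioi
    have hTm : MeasurableSet T := hg measurableSet_Ioi
    have hST : S + T ⊆ {x | l ≤ hr x} := by
      rintro z ⟨x, hx, y, hy, rfl⟩
      simp only [Set.mem_setOf_eq] at hx hy ⊢
      have h1 : ENNReal.ofReal l ≤ h (x + y) := by
        have hne0 : ENNReal.ofReal l ≠ 0 := by
          simp [ENNReal.ofReal_eq_zero, not_le, hl0]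
        calc ENNReal.ofReal l = ENNReal.ofReal l ^ (1 - t) * ENNReal.ofReal l ^ t := by
              rw [← ENNReal.rpow_add _ _ hne0 ENNReal.ofReal_ne_top]
              norm_num
          _ ≤ f x ^ (1 - t) * g y ^ t :=
              mul_le_mul' (ENNReal.rpow_le_rpow hx.le (by linarith))
                (ENNReal.rpow_le_rpow hy.le ht.le)
          _ ≤ h (x + y) := hle x y
      have h2 : ENNReal.ofReal l ≤ min (h (x + y)) 1 := le_min h1 hl1'.le
      calc l = (ENNReal.ofReal l).toReal := (ENNReal.toReal_ofReal hl0.le).symm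
        _ ≤ hr (x + y) := ENNReal.toReal_mono (hhne _) h2
    calc volume {x | l < fr x} + volume {x | l < gr x} = volume S + volume T := by
          rw [hSeq, hTeq]
      _ ≤ volume (S + T) := meas_add_meas S T hSm hTm hSne hTne
      _ ≤ volume {x | l ≤ hr x} := measure_mono hST
  -- put it together
  have hmono_f : Measurable fun l => volume {x | l < fr x} :=
    Antitone.measurable fun a b hab => measure_mono fun x hx => lt_of_le_of_lt hab hx
  calc (∫⁻ x, f x) + ∫⁻ x, g x
      ≤ (∫⁻ l in Set.Ioo 0 1, volume {x | l < fr x})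
        + ∫⁻ l in Set.Ioo 0 1, volume {x | l < gr x} := by
        rw [hfl, hgl]; exact add_le_add (hrest fr hfr1) (hrest gr hgr1)
    _ = ∫⁻ l in Set.Ioo 0 1, (volume {x | l < fr x} + volume {x | l < gr x}) :=
        (lintegral_add_left hmono_f _).symm
    _ ≤ ∫⁻ l in Set.Ioo 0 1, volume {x | l ≤ hr x} := setLIntegral_mono' measurableSet_Ioo hkey
    _ ≤ ∫⁻ l in Set.Ioi 0, volume {x | l ≤ hr x} := lintegral_mono_set Set.Ioo_subset_Ioi_self
    _ ≤ ∫⁻ x, h x := hhl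

lemma real_amgm {t α β : ℝ} (ht : 0 < t) (ht1 : t < 1) (hα : 0 ≤ α) (hβ : 0 ≤ β) :
    α ^ (1 - t) * β ^ t ≤ (1 - t) ^ (1 - t) * t ^ t * (α + β) := by
  have h1t : 0 < 1 - t := by linarith
  have key := Real.geom_mean_le_arith_mean2_weighted h1t.le ht.le
    (div_nonneg hα h1t.le) (div_nonneg hβ ht.le) (by ring)
  have h2 : (1 - t) * (α / (1 - t)) + t * (β / t) = α + β := by
    field_simp
  rw [h2] at key
  have h3 : ((1 - t) ^ (1 - t) * t ^ t) * ((α / (1 - t)) ^ (1 - t) * (β / t) ^ t)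
      = α ^ (1 - t) * β ^ t := by
    rw [show (1 - t) ^ (1 - t) * t ^ t * ((α / (1 - t)) ^ (1 - t) * (β / t) ^ t)
      = ((1 - t) ^ (1 - t) * (α / (1 - t)) ^ (1 - t)) * (t ^ t * (β / t) ^ t) by ring,
      ← Real.mul_rpow h1t.le (div_nonneg hα h1t.le),
      ← Real.mul_rpow ht.le (div_nonneg hβ ht.le),
      mul_div_cancel₀ _ h1t.ne', mul_div_cancel₀ _ ht.ne']
  calc α ^ (1 - t) * β ^ t
      = (1 - t) ^ (1 - t) * t ^ t * ((α / (1 - t)) ^ (1 - t) * (β / t) ^ t) := h3.symm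
    _ ≤ (1 - t) ^ (1 - t) * t ^ t * (α + β) := by
        apply mul_le_mul_of_nonneg_left key
        positivity

lemma ennreal_amgm {t : ℝ} (ht : 0 < t) (ht1 : t < 1) (a b : ℝ≥0∞) :
    a ^ (1 - t) * b ^ t ≤ ENNReal.ofReal ((1 - t) ^ (1 - t) * t ^ t) * (a + b) := by
  have h1t : 0 < 1 - t := by linarith
  have hc : 0 < (1 - t) ^ (1 - t) * t ^ t := by positivity
  rcases eq_or_ne a 0 with rfl | ha0
  · rw [ENNReal.zero_rpow_of_pos h1t, zero_mul]; exact zero_le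
  rcases eq_or_ne b 0 with rfl | hb0
  · rw [ENNReal.zero_rpow_of_pos ht, mul_zero]; exact zero_le
  rcases eq_or_ne a ⊤ with rfl | hat
  · have : ENNReal.ofReal ((1 - t) ^ (1 - t) * t ^ t) * (⊤ + b) = ⊤ := by
      rw [top_add, ENNReal.mul_top (by simp [ENNReal.ofReal_eq_zero, not_le, hc])]
    rw [this]; exact le_top
  rcases eq_or_ne b ⊤ with rfl | hbt
  · have : ENNReal.ofReal ((1 - t) ^ (1 - t) * t ^ t) * (a + ⊤) = ⊤ := by
      rw [add_top, ENNReal.mul_top (by simp [ENNReal.ofReal_eq_zero, not_le, hc])]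
    rw [this]; exact le_top
  -- finite positive case
  have ha : 0 < a.toReal := ENNReal.toReal_pos ha0 hat
  have hb : 0 < b.toReal := ENNReal.toReal_pos hb0 hbt
  have key := real_amgm ht ht1 ha.le hb.le
  calc a ^ (1 - t) * b ^ t
      = ENNReal.ofReal (a.toReal ^ (1 - t) * b.toReal ^ t) := by
        rw [ENNReal.ofReal_mul (by positivity), ← ENNReal.ofReal_rpow_of_pos ha,
          ← ENNReal.ofReal_rpow_of_pos hb, ENNReal.ofReal_toReal hat, ENNReal.ofReal_toReal hbt]
    _ ≤ ENNReal.ofReal ((1 - t) ^ (1 - t) * t ^ t * (a.toReal + b.toReal)) :=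
        ENNReal.ofReal_le_ofReal key
    _ = ENNReal.ofReal ((1 - t) ^ (1 - t) * t ^ t) * (a + b) := by
        rw [ENNReal.ofReal_mul hc.le, ENNReal.ofReal_add ha.le hb.le,
          ENNReal.ofReal_toReal hat, ENNReal.ofReal_toReal hbt]

lemma dim1_bounded {t : ℝ} (ht : 0 < t) (ht1 : t < 1) (f g h : ℝ → ℝ≥0∞)
    (hf : Measurable f) (hg : Measurable g) (hh : Measurable h)
    (k : ℝ≥0∞) (hk : k ≠ ⊤) (hfk : ∀ x, f x ≤ k) (hgk : ∀ x, g x ≤ k)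
    (hle : ∀ x y, f x ^ (1 - t) * g y ^ t ≤ h (x + y)) :
    (∫⁻ x, f x) ^ (1 - t) * (∫⁻ x, g x) ^ t
      ≤ ENNReal.ofReal ((1 - t) ^ (1 - t) * t ^ t) * ∫⁻ x, h x := by
  have h1t : 0 < 1 - t := by linarith
  set F := ⨆ x, f x with hF
  set G := ⨆ x, g x with hG
  rcases eq_or_ne F 0 with hF0 | hF0
  · have : ∀ x, f x = 0 := fun x => le_antisymm (hF0 ▸ le_iSup f x) (zero_le)
    rw [lintegral_congr this, lintegral_zero, ENNReal.zero_rpow_of_pos h1t, zero_mul]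
    exact zero_le
  rcases eq_or_ne G 0 with hG0 | hG0
  · have : ∀ x, g x = 0 := fun x => le_antisymm (hG0 ▸ le_iSup g x) (zero_le)
    rw [lintegral_congr this, lintegral_zero, ENNReal.zero_rpow_of_pos ht, mul_zero]
    exact zero_le
  have hFt : F ≠ ⊤ := ((iSup_le hfk).trans_lt hk.lt_top).ne
  have hGt : G ≠ ⊤ := ((iSup_le hgk).trans_lt hk.lt_top).ne
  -- normalized functions
  set f' := fun x => F⁻¹ * f x with hf'
  set g' := fun x => G⁻¹ * g x with hg'
  set h' := fun x => (F⁻¹ ^ (1 - t) * G⁻¹ ^ t) * h x with hh'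
  have hFinv : F⁻¹ * F = 1 := ENNReal.inv_mul_cancel hF0 hFt
  have hGinv : G⁻¹ * G = 1 := ENNReal.inv_mul_cancel hG0 hGt
  have hsupf : (⨆ x, f' x) = 1 := by
    rw [hf', ← ENNReal.mul_iSup, ← hF, hFinv]
  have hsupg : (⨆ x, g' x) = 1 := by
    rw [hg', ← ENNReal.mul_iSup, ← hG, hGinv]
  have key := dim1_core ht ht1 f' g' h'
    (measurable_const.mul hf) (measurable_const.mul hg) (measurable_const.mul hh)
    (fun x => by rw [← hsupf]; exact le_iSup f' x)
    (fun x => by rw [← hsupg]; exact le_iSup g' x)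
    (fun l hl => by rw [← hsupf] at hl; exact lt_iSup_iff.mp hl)
    (fun l hl => by rw [← hsupg] at hl; exact lt_iSup_iff.mp hl)
    (fun x y => by
      rw [hf', hg', hh']
      calc (F⁻¹ * f x) ^ (1 - t) * (G⁻¹ * g y) ^ t
          = (F⁻¹ ^ (1 - t) * G⁻¹ ^ t) * (f x ^ (1 - t) * g y ^ t) := by
            rw [ENNReal.mul_rpow_of_nonneg _ _ h1t.le, ENNReal.mul_rpow_of_nonneg _ _ ht.le]
            ring
        _ ≤ (F⁻¹ ^ (1 - t) * G⁻¹ ^ t) * h (x + y) := mul_le_mul_right (hle x y) _)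
  rw [hf', hg', hh'] at key
  rw [lintegral_const_mul _ hf, lintegral_const_mul _ hg, lintegral_const_mul _ hh] at key
  -- unfold everything
  set P := F⁻¹ * ∫⁻ x, f x with hP
  set Q := G⁻¹ * ∫⁻ x, g x with hQ
  have hFP : F * P = ∫⁻ x, f x := by
    rw [hP, ← mul_assoc, ENNReal.mul_inv_cancel hF0 hFt, one_mul]
  have hGQ : G * Q = ∫⁻ x, g x := by
    rw [hQ, ← mul_assoc, ENNReal.mul_inv_cancel hG0 hGt, one_mul]
  calc (∫⁻ x, f x) ^ (1 - t) * (∫⁻ x, g x) ^ t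
      = (F ^ (1 - t) * G ^ t) * (P ^ (1 - t) * Q ^ t) := by
        rw [← hFP, ← hGQ, ENNReal.mul_rpow_of_nonneg _ _ h1t.le,
          ENNReal.mul_rpow_of_nonneg _ _ ht.le]
        ring
    _ ≤ (F ^ (1 - t) * G ^ t) * (ENNReal.ofReal ((1 - t) ^ (1 - t) * t ^ t) * (P + Q)) :=
        mul_le_mul_right (ennreal_amgm ht ht1 P Q) _
    _ ≤ (F ^ (1 - t) * G ^ t) * (ENNReal.ofReal ((1 - t) ^ (1 - t) * t ^ t) *
        ((F⁻¹ ^ (1 - t) * G⁻¹ ^ t) * ∫⁻ x, h x)) := by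
        exact mul_le_mul_right (mul_le_mul_right key _) _
    _ = ((F * F⁻¹) ^ (1 - t) * (G * G⁻¹) ^ t) *
        (ENNReal.ofReal ((1 - t) ^ (1 - t) * t ^ t) * ∫⁻ x, h x) := by
        rw [ENNReal.mul_rpow_of_nonneg _ _ h1t.le, ENNReal.mul_rpow_of_nonneg _ _ ht.le]
        ring
    _ = ENNReal.ofReal ((1 - t) ^ (1 - t) * t ^ t) * ∫⁻ x, h x := by
        rw [ENNReal.mul_inv_cancel hF0 hFt, ENNReal.mul_inv_cancel hG0 hGt,
          ENNReal.one_rpow, ENNReal.one_rpow, one_mul, one_mul]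

lemma iSup_min_nat (a : ℝ≥0∞) : ⨆ k : ℕ, min a (k : ℝ≥0∞) = a := by
  apply le_antisymm (iSup_le fun k => min_le_left _ _)
  rcases eq_or_ne a ⊤ with rfl | ha
  · calc (⊤:ℝ≥0∞) = ⨆ k : ℕ, (k : ℝ≥0∞) := (ENNReal.iSup_natCast).symm
      _ ≤ ⨆ k : ℕ, min ⊤ (k:ℝ≥0∞) := iSup_mono fun k => by simp
  · obtain ⟨k, hk⟩ := ENNReal.exists_nat_gt ha
    calc a = min a (k:ℝ≥0∞) := (min_eq_left hk.le).symm
      _ ≤ ⨆ k : ℕ, min a (k : ℝ≥0∞) := le_iSup (fun k : ℕ => min a (k : ℝ≥0∞)) k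

lemma dim1 {t : ℝ} (ht : 0 < t) (ht1 : t < 1) (f g h : ℝ → ℝ≥0∞)
    (hf : Measurable f) (hg : Measurable g) (hh : Measurable h)
    (hle : ∀ x y, f x ^ (1 - t) * g y ^ t ≤ h (x + y)) :
    (∫⁻ x, f x) ^ (1 - t) * (∫⁻ x, g x) ^ t
      ≤ ENNReal.ofReal ((1 - t) ^ (1 - t) * t ^ t) * ∫⁻ x, h x := by
  have h1t : 0 < 1 - t := by linarith
  rcases eq_or_ne (∫⁻ x, f x) 0 with hf0 | hf0
  · rw [hf0, ENNReal.zero_rpow_of_pos h1t, zero_mul]; exact zero_le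
  rcases eq_or_ne (∫⁻ x, g x) 0 with hg0 | hg0
  · rw [hg0, ENNReal.zero_rpow_of_pos ht, mul_zero]; exact zero_le
  set fk := fun (k : ℕ) (x : ℝ) => min (f x) (k : ℝ≥0∞) with hfk
  set gk := fun (k : ℕ) (x : ℝ) => min (g x) (k : ℝ≥0∞) with hgk
  have hfkm : ∀ k, Measurable (fk k) := fun k => hf.min measurable_const
  have hgkm : ∀ k, Measurable (gk k) := fun k => hg.min measurable_const
  have hmonof : Monotone fun k : ℕ => ∫⁻ x, fk k x := fun k k' hkk =>
    lintegral_mono fun x => min_le_min le_rfl (by exact_mod_cast Nat.cast_le.mpr hkk)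
  have hmonog : Monotone fun k : ℕ => ∫⁻ x, gk k x := fun k k' hkk =>
    lintegral_mono fun x => min_le_min le_rfl (by exact_mod_cast Nat.cast_le.mpr hkk)
  have hsupf : (⨆ k : ℕ, ∫⁻ x, fk k x) = ∫⁻ x, f x := by
    rw [← lintegral_iSup hfkm (fun k k' hkk x =>
      min_le_min le_rfl (by exact_mod_cast Nat.cast_le.mpr hkk))]
    exact lintegral_congr fun x => iSup_min_nat (f x)
  have hsupg : (⨆ k : ℕ, ∫⁻ x, gk k x) = ∫⁻ x, g x := by
    rw [← lintegral_iSup hgkm (fun k k' hkk x =>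
      min_le_min le_rfl (by exact_mod_cast Nat.cast_le.mpr hkk))]
    exact lintegral_congr fun x => iSup_min_nat (g x)
  have htf : Filter.Tendsto (fun k : ℕ => ∫⁻ x, fk k x) Filter.atTop (nhds (∫⁻ x, f x)) := by
    rw [← hsupf]; exact tendsto_atTop_iSup hmonof
  have htg : Filter.Tendsto (fun k : ℕ => ∫⁻ x, gk k x) Filter.atTop (nhds (∫⁻ x, g x)) := by
    rw [← hsupg]; exact tendsto_atTop_iSup hmonog
  have htf' : Filter.Tendsto (fun k : ℕ => (∫⁻ x, fk k x) ^ (1 - t)) Filter.atTop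
      (nhds ((∫⁻ x, f x) ^ (1 - t))) :=
    (ENNReal.continuous_rpow_const.tendsto _).comp htf
  have htg' : Filter.Tendsto (fun k : ℕ => (∫⁻ x, gk k x) ^ t) Filter.atTop
      (nhds ((∫⁻ x, g x) ^ t)) :=
    (ENNReal.continuous_rpow_const.tendsto _).comp htg
  have hne0 : (∫⁻ x, f x) ^ (1 - t) ≠ 0 := by
    simp only [ne_eq, ENNReal.rpow_eq_zero_iff, not_or]
    constructor
    · rintro ⟨h1, _⟩; exact hf0 h1
    · rintro ⟨_, h2⟩; linarith
  have hne0' : (∫⁻ x, g x) ^ t ≠ 0 := by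
    simp only [ne_eq, ENNReal.rpow_eq_zero_iff, not_or]
    constructor
    · rintro ⟨h1, _⟩; exact hg0 h1
    · rintro ⟨_, h2⟩; linarith
  have hmul : Filter.Tendsto
      (fun k : ℕ => (∫⁻ x, fk k x) ^ (1 - t) * (∫⁻ x, gk k x) ^ t) Filter.atTop
      (nhds ((∫⁻ x, f x) ^ (1 - t) * (∫⁻ x, g x) ^ t)) :=
    ENNReal.Tendsto.mul htf' (Or.inl hne0) htg' (Or.inl hne0')
  refine le_of_tendsto hmul (Filter.Eventually.of_forall fun k => ?_)
  exact dim1_bounded ht ht1 (fk k) (gk k) h (hfkm k) (hgkm k) hh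
    (k : ℝ≥0∞) (natCast_ne_top k) (fun x => min_le_right _ _) (fun x => min_le_right _ _)
    (fun x y => le_trans
      (mul_le_mul' (ENNReal.rpow_le_rpow (min_le_left _ _) h1t.le)
        (ENNReal.rpow_le_rpow (min_le_left _ _) ht.le)) (hle x y))

theorem PL_pi (n : ℕ) {t : ℝ} (ht : 0 < t) (ht1 : t < 1)
    (f g h : (Fin n → ℝ) → ℝ≥0∞)
    (hf : Measurable f) (hg : Measurable g) (hh : Measurable h)
    (hle : ∀ x y, f x ^ (1 - t) * g y ^ t ≤ h (x + y)) :
    (∫⁻ x, f x) ^ (1 - t) * (∫⁻ x, g x) ^ t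
      ≤ (ENNReal.ofReal ((1 - t) ^ (1 - t) * t ^ t)) ^ n * ∫⁻ x, h x := by
  induction n with
  | zero =>
    have hvol : (volume : Measure (Fin 0 → ℝ)) = Measure.dirac 0 := by
      rw [show (volume : Measure (Fin 0 → ℝ)) = Measure.pi fun _ => volume from rfl,
        Measure.pi_of_empty]
      congr
      funext a
      exact a.elim0
    rw [hvol, lintegral_dirac _ f, lintegral_dirac _ g, lintegral_dirac _ h, pow_zero, one_mul]
    simpa using hle 0 0
  | succ n ih =>
    set e := MeasurableEquiv.piFinSuccAbove (fun _ : Fin (n+1) => ℝ) 0 with he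
    have mp : MeasurePreserving e volume volume :=
      volume_preserving_piFinSuccAbove (fun _ : Fin (n+1) => ℝ) 0
    have hadd : ∀ p q : ℝ × (Fin n → ℝ), e.symm p + e.symm q = e.symm (p + q) := by
      intro p q
      apply e.injective
      have eadd : ∀ a b : Fin (n+1) → ℝ, e (a + b) = e a + e b := fun a b => rfl
      rw [eadd, e.apply_symm_apply, e.apply_symm_apply, e.apply_symm_apply]
    set F := fun p : ℝ × (Fin n → ℝ) => f (e.symm p) with hF
    set G := fun p : ℝ × (Fin n → ℝ) => g (e.symm p) with hG
    set H := fun p : ℝ × (Fin n → ℝ) => h (e.symm p) with hH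
    have hFm : Measurable F := hf.comp e.symm.measurable
    have hGm : Measurable G := hg.comp e.symm.measurable
    have hHm : Measurable H := hh.comp e.symm.measurable
    have hint : ∀ (u : (Fin (n+1) → ℝ) → ℝ≥0∞), Measurable u →
        ∫⁻ x, u x = ∫⁻ s : ℝ, ∫⁻ x : Fin n → ℝ, u (e.symm (s, x)) := by
      intro u hu
      have h1 := mp.lintegral_comp (f := fun p => u (e.symm p)) (hu.comp e.symm.measurable)
      simp only [e.symm_apply_apply] at h1
      rw [h1]
      exact lintegral_prod (fun p => u (e.symm p)) (hu.comp e.symm.measurable).aemeasurable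
    set f' := fun s : ℝ => ∫⁻ x, F (s, x) with hf'
    set g' := fun s : ℝ => ∫⁻ x, G (s, x) with hg'
    set h' := fun s : ℝ => ∫⁻ x, H (s, x) with hh'
    have hf'm : Measurable f' := Measurable.lintegral_prod_right (f := fun s x => F (s, x)) hFm
    have hg'm : Measurable g' := Measurable.lintegral_prod_right (f := fun s x => G (s, x)) hGm
    have hh'm : Measurable h' := Measurable.lintegral_prod_right (f := fun s x => H (s, x)) hHm
    set C := (ENNReal.ofReal ((1 - t) ^ (1 - t) * t ^ t)) ^ n with hC
    have hcond : ∀ s u : ℝ, f' s ^ (1 - t) * g' u ^ t ≤ C * h' (s + u) := by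
      intro s u
      refine ih (fun x => F (s, x)) (fun y => G (u, y)) (fun z => H (s + u, z))
        (hFm.comp measurable_prodMk_left) (hGm.comp measurable_prodMk_left)
        (hHm.comp measurable_prodMk_left) ?_
      intro x y
      have : e.symm (s, x) + e.symm (u, y) = e.symm (s + u, x + y) := by
        rw [hadd]; rfl
      simpa [hF, hG, hH, this] using hle (e.symm (s, x)) (e.symm (u, y))
    have key := dim1 ht ht1 f' g' (fun s => C * h' s) hf'm hg'm (measurable_const.mul hh'm)
      hcond
    rw [lintegral_const_mul _ hh'm] at key
    calc (∫⁻ x, f x) ^ (1 - t) * (∫⁻ x, g x) ^ t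
        = (∫⁻ s, f' s) ^ (1 - t) * (∫⁻ s, g' s) ^ t := by rw [hint f hf, hint g hg]
      _ ≤ ENNReal.ofReal ((1 - t) ^ (1 - t) * t ^ t) * (C * ∫⁻ s, h' s) := key
      _ = (ENNReal.ofReal ((1 - t) ^ (1 - t) * t ^ t)) ^ (n + 1) * ∫⁻ x, h x := by
          rw [hint h hh, pow_succ, hC]; ring

lemma endgame {n : ℕ} (hn : 0 < n) {α β γ : ℝ} (hα : 0 < α) (hβ : 0 < β) (hγ : 0 ≤ γ)
    (h : ∀ t : ℝ, 0 < t → t < 1 →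
      α ^ (1 - t) * β ^ t ≤ ((1 - t) ^ (1 - t) * t ^ t) ^ n * γ) :
    α ^ ((1:ℝ) / n) + β ^ ((1:ℝ) / n) ≤ γ ^ ((1:ℝ) / n) := by
  have hn' : (n : ℝ) ≠ 0 := Nat.cast_ne_zero.mpr hn.ne'
  set a := α ^ ((1:ℝ) / n) with ha
  set b := β ^ ((1:ℝ) / n) with hb
  have ha0 : 0 < a := Real.rpow_pos_of_pos hα _
  have hb0 : 0 < b := Real.rpow_pos_of_pos hβ _
  have hab : 0 < a + b := by linarith
  set t := b / (a + b) with hT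
  have ht : 0 < t := div_pos hb0 hab
  have ht1 : t < 1 := (div_lt_one hab).mpr (by linarith)
  have h1t : 1 - t = a / (a + b) := by
    rw [hT]; field_simp; ring
  have key := h t ht ht1
  have hδ : 0 < 1 - t := by linarith
  have hpow : ∀ x : ℝ, 0 < x → (x ^ ((1:ℝ)/n)) ^ (n:ℝ) = x := by
    intro x hx
    rw [← Real.rpow_mul hx.le, one_div, inv_mul_cancel₀ hn', Real.rpow_one]
  have main : ∀ u v : ℝ, u + v = 1 →
      ((a/(a+b)) ^ u * (b/(a+b)) ^ v) * (a + b) = a ^ u * b ^ v := by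
    intro u v huv
    rw [Real.div_rpow ha0.le hab.le, Real.div_rpow hb0.le hab.le, div_mul_div_comm,
      div_mul_eq_mul_div, ← Real.rpow_add hab, huv, Real.rpow_one, mul_div_assoc,
      div_self hab.ne', mul_one]
  have hc : ((1 - t) ^ (1 - t) * t ^ t) * (a + b) = a ^ (1 - t) * b ^ t := by
    have := main (1 - t) t (by ring)
    rw [← h1t, ← hT] at this
    exact this
  have hcpos : 0 < (1 - t) ^ (1 - t) * t ^ t := by positivity
  have e1 : ((1 - t) ^ (1 - t) * t ^ t) ^ n * (a + b) ^ (n:ℝ)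
      = (((1 - t) ^ (1 - t) * t ^ t) * (a + b)) ^ (n:ℝ) := by
    rw [Real.mul_rpow hcpos.le hab.le, Real.rpow_natCast ((1 - t) ^ (1 - t) * t ^ t) n]
  have haα : a ^ ((n:ℝ)) = α := hpow α hα
  have hbβ : b ^ ((n:ℝ)) = β := hpow β hβ
  have hcn : ((1 - t) ^ (1 - t) * t ^ t) ^ n * (a + b) ^ (n:ℝ) = α ^ (1 - t) * β ^ t := by
    rw [e1, hc, Real.mul_rpow (Real.rpow_nonneg ha0.le _) (Real.rpow_nonneg hb0.le _),
      ← Real.rpow_mul ha0.le, ← Real.rpow_mul hb0.le, mul_comm (1 - t) (n:ℝ),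
      mul_comm t (n:ℝ), Real.rpow_mul ha0.le, Real.rpow_mul hb0.le, haα, hbβ]
  have hcpos' : 0 < ((1 - t) ^ (1 - t) * t ^ t) ^ n := by positivity
  have hfin : (a + b) ^ (n:ℝ) ≤ γ := by
    have h2 : ((1 - t) ^ (1 - t) * t ^ t) ^ n * (a + b) ^ (n:ℝ)
        ≤ ((1 - t) ^ (1 - t) * t ^ t) ^ n * γ := by rw [hcn]; exact key
    exact le_of_mul_le_mul_left h2 hcpos'
  calc a + b = ((a + b) ^ (n:ℝ)) ^ ((1:ℝ)/n) := by
        rw [← Real.rpow_mul hab.le, show (n:ℝ) * (1/n) = 1 by field_simp, Real.rpow_one]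
    _ ≤ γ ^ ((1:ℝ)/n) := Real.rpow_le_rpow (Real.rpow_nonneg hab.le _) hfin (by positivity)


lemma BM_pi (n : ℕ) {t : ℝ} (ht : 0 < t) (ht1 : t < 1) (A B : Set (Fin n → ℝ))
    (hA : IsCompact A) (hB : IsCompact B) :
    volume A ^ (1 - t) * volume B ^ t
      ≤ (ENNReal.ofReal ((1 - t) ^ (1 - t) * t ^ t)) ^ n * volume (A + B) := by
  have h1t : 0 < 1 - t := by linarith
  set f := A.indicator (1 : (Fin n → ℝ) → ℝ≥0∞) with hfdef
  set g := B.indicator (1 : (Fin n → ℝ) → ℝ≥0∞) with hgdef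
  set h := (A + B).indicator (1 : (Fin n → ℝ) → ℝ≥0∞) with hhdef
  have hABm : MeasurableSet (A + B) := (hA.add hB).measurableSet
  have hf : Measurable f := measurable_const.indicator hA.measurableSet
  have hg : Measurable g := measurable_const.indicator hB.measurableSet
  have hh : Measurable h := measurable_const.indicator hABm
  have hcond : ∀ x y, f x ^ (1 - t) * g y ^ t ≤ h (x + y) := by
    intro x y
    by_cases hx : x ∈ A
    · by_cases hy : y ∈ B
      · have hxy : x + y ∈ A + B := Set.add_mem_add hx hy
        simp [hfdef, hgdef, hhdef, Set.indicator_of_mem, hx, hy, hxy, ENNReal.one_rpow]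
      · simp [hgdef, Set.indicator_of_notMem, hy, ENNReal.zero_rpow_of_pos ht]
    · simp [hfdef, Set.indicator_of_notMem, hx, ENNReal.zero_rpow_of_pos h1t]
  have key := PL_pi n ht ht1 f g h hf hg hh hcond
  have hif : ∫⁻ x, f x = volume A := lintegral_indicator_one hA.measurableSet
  have hig : ∫⁻ x, g x = volume B := lintegral_indicator_one hB.measurableSet
  have hih : ∫⁻ x, h x = volume (A + B) := lintegral_indicator_one hABm
  rwa [hif, hig, hih] at key

end BrunnMinkowskiAux

/-- Brunn–Minkowski inequality: for nonempty compact sets `A, B ⊆ ℝⁿ`,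
`Vol(A + B)^(1/n) ≥ Vol(A)^(1/n) + Vol(B)^(1/n)`, where `A + B` is the Minkowski sum. -/
theorem brunn_minkowski (n : ℕ) (hn : 0 < n)
    (A B : Set (EuclideanSpace ℝ (Fin n)))
    (hA : IsCompact A) (hB : IsCompact B)
    (hAne : A.Nonempty) (hBne : B.Nonempty) :
    (volume A).toReal ^ ((1 : ℝ) / n) + (volume B).toReal ^ ((1 : ℝ) / n)
      ≤ (volume (A + B)).toReal ^ ((1 : ℝ) / n) := by
  classical
  have hn' : ((1:ℝ) / n) ≠ 0 := by positivity
  have hABc : IsCompact (A + B) := hA.add hB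
  have hABfin : volume (A + B) ≠ ⊤ := hABc.measure_lt_top.ne
  have hAfin : volume A ≠ ⊤ := hA.measure_lt_top.ne
  have hBfin : volume B ≠ ⊤ := hB.measure_lt_top.ne
  -- degenerate cases
  rcases eq_or_ne (volume A) 0 with hA0 | hA0
  · rw [hA0]
    simp only [ENNReal.toReal_zero, Real.zero_rpow hn', zero_add]
    refine Real.rpow_le_rpow ENNReal.toReal_nonneg ?_ (by positivity)
    refine ENNReal.toReal_mono hABfin ?_
    obtain ⟨a₀, ha₀⟩ := hAne
    calc volume B = volume ({a₀} + B) := by simp [Set.singleton_add]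
      _ ≤ volume (A + B) := measure_mono (Set.add_subset_add (by simpa using ha₀) le_rfl)
  rcases eq_or_ne (volume B) 0 with hB0 | hB0
  · rw [hB0]
    simp only [ENNReal.toReal_zero, Real.zero_rpow hn', add_zero]
    refine Real.rpow_le_rpow ENNReal.toReal_nonneg ?_ (by positivity)
    refine ENNReal.toReal_mono hABfin ?_
    obtain ⟨b₀, hb₀⟩ := hBne
    calc volume A = volume (A + {b₀}) := by simp [Set.add_singleton]
      _ ≤ volume (A + B) := measure_mono (Set.add_subset_add le_rfl (by simpa using hb₀))
  -- main case
  have hα : 0 < (volume A).toReal := ENNReal.toReal_pos hA0 hAfin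
  have hβ : 0 < (volume B).toReal := ENNReal.toReal_pos hB0 hBfin
  refine endgame hn hα hβ ENNReal.toReal_nonneg ?_
  intro t ht ht1
  have h1t : 0 < 1 - t := by linarith
  have hcpos : 0 < (1 - t) ^ (1 - t) * t ^ t := by positivity
  -- transfer to the pi space
  set e := (MeasurableEquiv.toLp 2 (Fin n → ℝ)).symm with hedef
  have mp : MeasurePreserving e volume volume :=
    EuclideanSpace.volume_preserving_symm_measurableEquiv_toLp (Fin n)
  have econt : Continuous e := by
    have : ⇑e = ⇑(PiLp.continuousLinearEquiv 2 ℝ (fun _ : Fin n => ℝ)) := rfl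
    rw [this]; exact (PiLp.continuousLinearEquiv 2 ℝ _).continuous
  have eadd : ∀ x y : EuclideanSpace ℝ (Fin n), e (x + y) = e x + e y := fun _ _ => rfl
  set A' := e '' A with hA'def
  set B' := e '' B with hB'def
  have hA' : IsCompact A' := hA.image econt
  have hB' : IsCompact B' := hB.image econt
  have himg : ∀ S : Set (EuclideanSpace ℝ (Fin n)), MeasurableSet (e '' S) →
      volume (e '' S) = volume S := by
    intro S hS
    have h2 := mp.measure_preimage hS.nullMeasurableSet
    rw [Set.preimage_image_eq S e.injective] at h2
    exact h2.symm
  have hsum : e '' (A + B) = A' + B' := by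
    ext z
    constructor
    · rintro ⟨w, ⟨x, hx, y, hy, rfl⟩, rfl⟩
      exact ⟨e x, ⟨x, hx, rfl⟩, e y, ⟨y, hy, rfl⟩, (eadd x y).symm⟩
    · rintro ⟨-, ⟨x, hx, rfl⟩, -, ⟨y, hy, rfl⟩, rfl⟩
      exact ⟨x + y, Set.add_mem_add hx hy, eadd x y⟩
  have hvA : volume A' = volume A := himg A hA'.measurableSet
  have hvB : volume B' = volume B := himg B hB'.measurableSet
  have hvAB : volume (A' + B') = volume (A + B) := by
    rw [← hsum]
    refine himg (A + B) ?_
    rw [hsum]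
    exact (hA'.add hB').measurableSet
  have key := BM_pi n ht ht1 A' B' hA' hB'
  rw [hvA, hvB, hvAB] at key
  -- convert to a real inequality
  have hconv : ENNReal.ofReal ((volume A).toReal ^ (1 - t) * (volume B).toReal ^ t)
      ≤ ENNReal.ofReal (((1 - t) ^ (1 - t) * t ^ t) ^ n * (volume (A + B)).toReal) := by
    calc ENNReal.ofReal ((volume A).toReal ^ (1 - t) * (volume B).toReal ^ t)
        = volume A ^ (1 - t) * volume B ^ t := by
          rw [ENNReal.ofReal_mul (by positivity), ← ENNReal.ofReal_rpow_of_pos hα,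
            ← ENNReal.ofReal_rpow_of_pos hβ, ENNReal.ofReal_toReal hAfin,
            ENNReal.ofReal_toReal hBfin]
      _ ≤ (ENNReal.ofReal ((1 - t) ^ (1 - t) * t ^ t)) ^ n * volume (A + B) := key
      _ = ENNReal.ofReal (((1 - t) ^ (1 - t) * t ^ t) ^ n * (volume (A + B)).toReal) := by
          have : ENNReal.ofReal (((1 - t) ^ (1 - t) * t ^ t) ^ n * (volume (A + B)).toReal)
              = (ENNReal.ofReal ((1 - t) ^ (1 - t) * t ^ t)) ^ n * volume (A + B) := by
            rw [ENNReal.ofReal_mul (by positivity), ENNReal.ofReal_pow hcpos.le,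
              ENNReal.ofReal_toReal hABfin]
          exact this.symm
  exact (ENNReal.ofReal_le_ofReal_iff (by positivity)).mp hconv
end

section
/- For a positive measurable f with suitable integrability, the derivative of the L^p norm with respect to p satisfies d/dp ‖f‖_{L^p(dμ)} = (1/p²)·‖f‖_{L^p(dμ)}^{1−p} · Ent_μ(|f|^p), where Ent_μ(g) = ∫ g log g dμ − (∫ g dμ)·log(∫ g dμ). -/
open MeasureTheory Set

/-- Derivative of the `L^p` norm in `p`: for a positive measurable `f` with
`f^q` and `f^q log(f^q)` integrable for `q` in an open interval around `p`,
`d/dp ‖f‖_{L^p} = (1/p²) ‖f‖_{L^p}^{1-p} · Ent_μ(f^p)`, where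
`‖f‖_{L^p} = (∫ f^p dμ)^(1/p)` and
`Ent_μ(g) = ∫ g log g dμ − (∫ g dμ) log(∫ g dμ)`. -/
theorem lp_norm_hasDerivAt {α : Type*} [MeasurableSpace α] (μ : Measure α)
    (f : α → ℝ) (hmeas : Measurable f) (hpos : ∀ x, 0 < f x)
    (a b p : ℝ) (ha : 0 < a) (hp : p ∈ Ioo a b)
    (hint : ∀ q ∈ Ioo a b, Integrable (fun x => f x ^ q) μ)
    (hint' : ∀ q ∈ Ioo a b,
      Integrable (fun x => f x ^ q * Real.log (f x ^ q)) μ) :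
    HasDerivAt (fun q => (∫ x, f x ^ q ∂μ) ^ (1 / q))
      ((1 / p ^ 2) * ((∫ x, f x ^ p ∂μ) ^ (1 / p)) ^ (1 - p) *
        ((∫ x, f x ^ p * Real.log (f x ^ p) ∂μ)
          - (∫ x, f x ^ p ∂μ) * Real.log (∫ x, f x ^ p ∂μ)))
      p := by
  obtain ⟨hap, hpb⟩ := hp
  have hp0 : 0 < p := ha.trans hap
  set c : ℝ := (a + p) / 2 with hc
  set d : ℝ := (p + b) / 2 with hd
  have hac : a < c := by rw [hc]; linarith
  have hcp : c < p := by rw [hc]; linarith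
  have hpd : p < d := by rw [hd]; linarith
  have hdb : d < b := by rw [hd]; linarith
  have hc0 : 0 < c := ha.trans hac
  have hd0 : 0 < d := hp0.trans hpd
  have hc_mem : c ∈ Ioo a b := ⟨hac, hcp.trans hpb⟩
  have hd_mem : d ∈ Ioo a b := ⟨hap.trans hpd, hdb⟩
  set ε : ℝ := min (p - c) (d - p) with hε
  have hε0 : 0 < ε := lt_min (by linarith) (by linarith)
  have hball : Metric.ball p ε ⊆ Icc c d := by
    intro q hq
    rw [Metric.mem_ball, Real.dist_eq, abs_lt] at hq
    have h1 := min_le_left (p - c) (d - p)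
    have h2 := min_le_right (p - c) (d - p)
    constructor <;> [linarith [hq.1]; linarith [hq.2]]
  have hball' : Metric.ball p ε ⊆ Ioo a b := fun q hq =>
    ⟨hac.trans_le (hball hq).1, lt_of_le_of_lt (hball hq).2 hdb⟩
  have hm : ∀ q : ℝ, Measurable fun x => f x ^ q := by
    intro q
    have : (fun x => f x ^ q) = fun x => Real.exp (Real.log (f x) * q) :=
      funext fun x => Real.rpow_def_of_pos (hpos x) q
    rw [this]
    exact (hmeas.log.mul_const q).exp
  set bound : α → ℝ := fun x => f x ^ c * |Real.log (f x)| + f x ^ d * |Real.log (f x)|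
    with hbound_def
  have hbound_int : Integrable bound μ := by
    have h1 : Integrable (fun x => (1 / c) * |f x ^ c * Real.log (f x ^ c)|) μ :=
      ((hint' c hc_mem).abs.const_mul _)
    have h2 : Integrable (fun x => (1 / d) * |f x ^ d * Real.log (f x ^ d)|) μ :=
      ((hint' d hd_mem).abs.const_mul _)
    apply (h1.add h2).congr
    filter_upwards with x
    have hfx := hpos x
    simp only [Pi.add_apply, hbound_def, Real.log_rpow hfx, abs_mul,
      abs_of_nonneg (Real.rpow_nonneg hfx.le c),
      abs_of_nonneg (Real.rpow_nonneg hfx.le d), abs_of_pos hc0, abs_of_pos hd0]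
    field_simp
  have key := hasDerivAt_integral_of_dominated_loc_of_deriv_le (μ := μ)
    (F := fun q x => f x ^ q) (F' := fun q x => f x ^ q * Real.log (f x))
    (x₀ := p) (bound := bound) (Metric.ball_mem_nhds p hε0)
    (Filter.Eventually.of_forall fun q => (hm q).aestronglyMeasurable)
    (hint p ⟨hap, hpb⟩)
    (((hm p).mul hmeas.log).aestronglyMeasurable)
    (Filter.Eventually.of_forall fun x q hq => by
      have hfx := hpos x
      have hq' := hball hq
      rw [Real.norm_eq_abs, abs_mul, abs_of_nonneg (Real.rpow_nonneg hfx.le q),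
        hbound_def]
      rcases le_or_gt (f x) 1 with hf1 | hf1
      · have hle : f x ^ q ≤ f x ^ c := Real.rpow_le_rpow_of_exponent_ge hfx hf1 hq'.1
        have h1 := mul_le_mul_of_nonneg_right hle (abs_nonneg (Real.log (f x)))
        exact h1.trans (le_add_of_nonneg_right (by positivity))
      · have hle : f x ^ q ≤ f x ^ d := Real.rpow_le_rpow_of_exponent_le hf1.le hq'.2
        have h1 := mul_le_mul_of_nonneg_right hle (abs_nonneg (Real.log (f x)))
        exact h1.trans (le_add_of_nonneg_left (by positivity)))
    hbound_int
    (Filter.Eventually.of_forall fun x q _ =>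
      (Real.hasStrictDerivAt_const_rpow (hpos x) q).hasDerivAt)
  obtain ⟨hF'int, hF⟩ := key
  set J : ℝ := ∫ x, f x ^ p ∂μ with hJ
  set I : ℝ := ∫ x, f x ^ p * Real.log (f x) ∂μ with hI
  have hent : (∫ x, f x ^ p * Real.log (f x ^ p) ∂μ) = p * I := by
    rw [hI, ← integral_const_mul]
    congr 1; funext x
    rw [Real.log_rpow (hpos x)]; ring
  have hJnn : 0 ≤ J := integral_nonneg fun x => Real.rpow_nonneg (hpos x).le p
  rcases hJnn.eq_or_lt with hJ0 | hJpos
  · -- J = 0 : measure is zero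
    have hmu : μ = 0 := by
      have h := (integral_eq_zero_iff_of_nonneg
        (fun x => Real.rpow_nonneg (hpos x).le p) (hint p ⟨hap, hpb⟩)).mp hJ0.symm
      by_contra hne
      rw [Filter.EventuallyEq, ae_iff] at h
      simp only [Pi.zero_apply] at h
      have huniv : {x | ¬ f x ^ p = 0} = univ := by
        ext x
        simp [Real.rpow_eq_zero_iff_of_nonneg (hpos x).le, (hpos x).ne']
      rw [huniv] at h
      exact hne (Measure.measure_univ_eq_zero.mp h)
    subst hmu
    simp only [integral_zero_measure]
    have heq : (fun q : ℝ => (0:ℝ) ^ (1/q)) =ᶠ[nhds p] fun _ => (0:ℝ) := by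
      filter_upwards [eventually_gt_nhds hp0] with q hq
      rw [Real.zero_rpow (by positivity : (0:ℝ) < 1/q).ne']
    have h0 : HasDerivAt (fun _ : ℝ => (0:ℝ)) 0 p := hasDerivAt_const _ _
    have := h0.congr_of_eventuallyEq heq
    convert this using 1
    · rfl
    · rfl
    rw [← hJ0]
    simp
  · -- main case
    have hg : HasDerivAt (fun q : ℝ => 1 / q) (-1 / p ^ 2) p := by
      have := (hasDerivAt_const p (1:ℝ)).div (hasDerivAt_id p) hp0.ne'
      convert this using 1
      · rfl
      · rfl
      · rfl
      simp
    have hmain := hF.rpow hg (show 0 < J from hJpos)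
    convert hmain using 1
    rw [hent]
    rw [← Real.rpow_mul hJpos.le]
    have he1 : (1/p) * (1 - p) = 1/p - 1 := by field_simp
    rw [he1]
    have he2 : J ^ (1/p) = J ^ (1/p - 1) * J := by
      rw [Real.rpow_sub hJpos, Real.rpow_one, div_mul_cancel₀ _ hJpos.ne']
    rw [he2]
    field_simp
    ring
end

section
/- For the half-space H_a = {x ∈ ℝⁿ : ⟨x, u⟩ ≤ a} with u a unit vector, the Gaussian measure satisfies γ_n(H_a) = Φ(a) and the Gaussian boundary measure satisfies γ_n⁺(H_a) = φ(a), where Φ is the standard normal CDF, φ its density, and γ_n⁺(A) = liminf_{ε→0⁺} (γ_n(A_ε) − γ_n(A))/ε with A_ε the open ε-neighbourhood of A. -/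
open MeasureTheory Real Set Filter
open Topology

/-- The standard Gaussian probability measure `γ_n` on `ℝⁿ`. -/
noncomputable def gaussianMeasureN (n : ℕ) : Measure (EuclideanSpace ℝ (Fin n)) :=
  volume.withDensity
    (fun x => ENNReal.ofReal ((2 * π) ^ (-(n : ℝ) / 2) * exp (-‖x‖ ^ 2 / 2)))

/-- The standard Gaussian density on `ℝ`. -/
noncomputable def gaussPdf (x : ℝ) : ℝ := (Real.sqrt (2 * π))⁻¹ * exp (-x ^ 2 / 2)

/-- The standard Gaussian cumulative distribution function. -/
noncomputable def gaussCdf (a : ℝ) : ℝ := ∫ x in Iic a, gaussPdf x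


lemma gaussPdf_nonneg (x : ℝ) : 0 ≤ gaussPdf x := by
  unfold gaussPdf; positivity

lemma gaussPdf_continuous : Continuous gaussPdf := by
  unfold gaussPdf; continuity

lemma gaussPdf_eq (x : ℝ) : gaussPdf x = (Real.sqrt (2 * π))⁻¹ * exp (-(1/2) * x ^ 2) := by
  unfold gaussPdf; ring_nf

lemma gaussPdf_integrable : Integrable gaussPdf := by
  have h : Integrable (fun x : ℝ => exp (-(1/2) * x ^ 2)) := integrable_exp_neg_mul_sq (by norm_num)
  have := h.const_mul (Real.sqrt (2 * π))⁻¹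
  refine this.congr ?_
  filter_upwards with x using (gaussPdf_eq x).symm

lemma integral_gaussPdf : ∫ x, gaussPdf x = 1 := by
  simp_rw [gaussPdf_eq]
  rw [integral_const_mul, integral_gaussian]
  have : π / (1/2 : ℝ) = 2 * π := by ring
  rw [this, inv_mul_cancel₀]
  exact Real.sqrt_ne_zero'.mpr (by positivity)

lemma lintegral_gaussPdf_univ : ∫⁻ x, ENNReal.ofReal (gaussPdf x) = 1 := by
  rw [← ofReal_integral_eq_lintegral_ofReal gaussPdf_integrable]
  · rw [integral_gaussPdf]; simp
  · filter_upwards with x using gaussPdf_nonneg x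


lemma sqrt_two_pi_inv : (Real.sqrt (2 * π))⁻¹ = (2 * π) ^ (-(1:ℝ)/2) := by
  rw [Real.sqrt_eq_rpow, ← Real.rpow_neg (by positivity)]
  norm_num

lemma prod_gaussPdf (n : ℕ) (y : Fin n → ℝ) :
    ∏ i, gaussPdf (y i) = (2 * π) ^ (-(n : ℝ) / 2) * exp (-(∑ i, (y i) ^ 2) / 2) := by
  unfold gaussPdf
  rw [Finset.prod_mul_distrib, Finset.prod_const, ← Real.exp_sum, sqrt_two_pi_inv,
    Finset.card_univ, Fintype.card_fin,
    ← Real.rpow_natCast ((2 * π) ^ (-(1:ℝ)/2)) n, ← Real.rpow_mul (by positivity)]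
  congr 1
  · congr 1; ring
  · congr 1
    simp [Finset.sum_div, neg_div]

lemma measurable_ofReal_gaussPdf : Measurable fun t : ℝ => ENNReal.ofReal (gaussPdf t) := by
  apply Measurable.ennreal_ofReal
  unfold gaussPdf; fun_prop

lemma measurable_prod_gaussPdf (n : ℕ) :
    Measurable fun y : Fin n → ℝ => ∏ i, ENNReal.ofReal (gaussPdf (y i)) := by
  apply Finset.measurable_prod
  intro i _
  exact measurable_ofReal_gaussPdf.comp (measurable_pi_apply i)

lemma lintegral_pi_gauss : ∀ n : ℕ,
    ∫⁻ y : Fin n → ℝ, ∏ i, ENNReal.ofReal (gaussPdf (y i)) = 1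
  | 0 => by
      simp only [Finset.univ_eq_empty, Finset.prod_empty, lintegral_one]
      simp [volume_pi, Measure.pi_univ]
  | (n+1) => by
      have h := volume_preserving_piFinSuccAbove (fun _ : Fin (n+1) => ℝ) 0
      set e := MeasurableEquiv.piFinSuccAbove (fun _ : Fin (n+1) => ℝ) 0 with he
      have key : ∫⁻ y : Fin (n+1) → ℝ, ∏ i, ENNReal.ofReal (gaussPdf (y i))
          = ∫⁻ p : ℝ × (Fin n → ℝ),
              ENNReal.ofReal (gaussPdf p.1) * ∏ j, ENNReal.ofReal (gaussPdf (p.2 j))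
            := by
        rw [← h.lintegral_comp_emb (MeasurableEquiv.measurableEmbedding e)]
        · refine lintegral_congr fun y => ?_
          rw [Fin.prod_univ_succAbove (fun i => ENNReal.ofReal (gaussPdf (y i))) 0]
          rfl
      rw [key, Measure.volume_eq_prod _ _, lintegral_prod_mul measurable_ofReal_gaussPdf.aemeasurable
        (measurable_prod_gaussPdf n).aemeasurable, lintegral_gaussPdf_univ,
        lintegral_pi_gauss n, one_mul]

lemma lintegral_pi_gauss_set (n : ℕ) (s : Set ℝ) (hs : MeasurableSet s) :
    ∫⁻ y : Fin (n+1) → ℝ in {y | y 0 ∈ s}, ∏ i, ENNReal.ofReal (gaussPdf (y i))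
      = ∫⁻ t in s, ENNReal.ofReal (gaussPdf t) := by
  have hset : MeasurableSet {y : Fin (n+1) → ℝ | y 0 ∈ s} := (measurable_pi_apply 0) hs
  rw [← lintegral_indicator hset, ← lintegral_indicator hs]
  have h := volume_preserving_piFinSuccAbove (fun _ : Fin (n+1) => ℝ) 0
  set e := MeasurableEquiv.piFinSuccAbove (fun _ : Fin (n+1) => ℝ) 0 with he
  have key : ∫⁻ y : Fin (n+1) → ℝ,
        {y : Fin (n+1) → ℝ | y 0 ∈ s}.indicator
          (fun y => ∏ i, ENNReal.ofReal (gaussPdf (y i))) y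
      = ∫⁻ p : ℝ × (Fin n → ℝ),
          (s.indicator (fun t => ENNReal.ofReal (gaussPdf t)) p.1)
            * ∏ j, ENNReal.ofReal (gaussPdf (p.2 j))
        := by
    rw [← h.lintegral_comp_emb (MeasurableEquiv.measurableEmbedding e)]
    refine lintegral_congr fun y => ?_
    have h1 : (e y).1 = y 0 := rfl
    have h2 : ∀ j, (e y).2 j = y (Fin.succAbove 0 j) := fun _ => rfl
    simp_rw [h1, h2]
    by_cases hy : y 0 ∈ s
    · rw [Set.indicator_of_mem (show y ∈ {y : Fin (n+1) → ℝ | y 0 ∈ s} from hy),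
        Fin.prod_univ_succAbove (fun i => ENNReal.ofReal (gaussPdf (y i))) 0,
        Set.indicator_of_mem hy]
    · rw [Set.indicator_of_notMem (show y ∉ {y : Fin (n+1) → ℝ | y 0 ∈ s} from hy),
        Set.indicator_of_notMem hy, zero_mul]
  rw [key, Measure.volume_eq_prod _ _, lintegral_prod_mul (Measurable.aemeasurable (by
      exact (measurable_ofReal_gaussPdf.indicator hs)))
    (measurable_prod_gaussPdf n).aemeasurable, lintegral_pi_gauss n, mul_one]



lemma gaussianMeasureN_inner_mem (n : ℕ) (u : EuclideanSpace ℝ (Fin n)) (hu : ‖u‖ = 1)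
    (s : Set ℝ) (hs : MeasurableSet s) :
    gaussianMeasureN n {x | inner ℝ x u ∈ s} = ∫⁻ t in s, ENNReal.ofReal (gaussPdf t) := by
  obtain ⟨m, rfl⟩ : ∃ m, n = m + 1 := by
    rcases n with _ | m
    · exfalso
      have : u = 0 := Subsingleton.elim u 0
      rw [this, norm_zero] at hu; norm_num at hu
    · exact ⟨m, rfl⟩
  -- orthonormal basis with b 0 = u
  have horth : Orthonormal ℝ (({0} : Set (Fin (m+1))).restrict (fun _ => u)) := by
    rw [orthonormal_iff_ite]
    intro i j
    have hij : i = j := Subsingleton.elim i j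
    subst hij
    rw [if_pos rfl]; show inner ℝ u u = 1; rw [real_inner_self_eq_norm_sq, hu]
    norm_num
  obtain ⟨b, hb⟩ := horth.exists_orthonormalBasis_extension_of_card_eq
    (by simp [finrank_euclideanSpace_fin]) -- finrank = card
  have hb0 : b 0 = u := hb 0 rfl
  set e : EuclideanSpace ℝ (Fin (m+1)) ≃ᵐ (Fin (m+1) → ℝ) :=
    b.measurableEquiv.trans (MeasurableEquiv.toLp 2 (Fin (m+1) → ℝ)).symm with he
  have hmp : MeasurePreserving e volume volume :=
    (EuclideanSpace.volume_preserving_symm_measurableEquiv_toLp (Fin (m+1))).comp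
      b.measurePreserving_measurableEquiv
  have hcoord : ∀ x, e x 0 = inner ℝ x u := by
    intro x
    have : e x 0 = b.repr x 0 := rfl
    rw [this, b.repr_apply_apply, hb0, real_inner_comm]
  have hnorm : ∀ x : EuclideanSpace ℝ (Fin (m+1)), ∑ i, (e x i) ^ 2 = ‖x‖ ^ 2 := by
    intro x
    have h1 : ‖b.repr x‖ = ‖x‖ := b.repr.norm_map x
    have h2 : ‖b.repr x‖ ^ 2 = ∑ i, ‖b.repr x i‖ ^ 2 := by
      rw [EuclideanSpace.norm_eq, Real.sq_sqrt]
      positivity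
    rw [← h1, h2]
    exact Finset.sum_congr rfl fun i _ => by rw [Real.norm_eq_abs, sq_abs]; rfl
  have hA : MeasurableSet {x : EuclideanSpace ℝ (Fin (m+1)) | inner ℝ x u ∈ s} := by
    have : Measurable fun x : EuclideanSpace ℝ (Fin (m+1)) => (inner ℝ x u : ℝ) :=
      (continuous_id.inner continuous_const).measurable
    exact this hs
  rw [gaussianMeasureN, withDensity_apply _ hA]
  have hAeq : {x : EuclideanSpace ℝ (Fin (m+1)) | inner ℝ x u ∈ s}
      = e ⁻¹' {y : Fin (m+1) → ℝ | y 0 ∈ s} := by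
    ext x; simp [Set.mem_preimage, hcoord x]
  have hpt : ∀ x : EuclideanSpace ℝ (Fin (m+1)),
      ENNReal.ofReal ((2 * π) ^ (-((m+1 : ℕ) : ℝ) / 2) * exp (-‖x‖ ^ 2 / 2))
        = ∏ i, ENNReal.ofReal (gaussPdf (e x i)) := by
    intro x
    rw [← ENNReal.ofReal_prod_of_nonneg (fun i _ => gaussPdf_nonneg _), prod_gaussPdf,
      hnorm x]
  calc ∫⁻ x in {x | inner ℝ x u ∈ s},
        ENNReal.ofReal ((2 * π) ^ (-((m+1 : ℕ) : ℝ) / 2) * exp (-‖x‖ ^ 2 / 2)) ∂volume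
      = ∫⁻ x in e ⁻¹' {y : Fin (m+1) → ℝ | y 0 ∈ s},
          ∏ i, ENNReal.ofReal (gaussPdf (e x i)) ∂volume := by
        rw [← hAeq]; exact setLIntegral_congr_fun hA (fun x _ => hpt x)
    _ = ∫⁻ y : Fin (m+1) → ℝ in {y | y 0 ∈ s}, ∏ i, ENNReal.ofReal (gaussPdf (y i)) ∂volume :=
        hmp.setLIntegral_comp_preimage_emb e.measurableEmbedding
          (fun y => ∏ i, ENNReal.ofReal (gaussPdf (y i))) _
    _ = ∫⁻ t in s, ENNReal.ofReal (gaussPdf t) := lintegral_pi_gauss_set m s hs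

lemma thickening_halfspace {n : ℕ} (u : EuclideanSpace ℝ (Fin n)) (hu : ‖u‖ = 1) (a : ℝ)
    {ε : ℝ} (hε : 0 < ε) :
    Metric.thickening ε {x : EuclideanSpace ℝ (Fin n) | inner ℝ x u ≤ a}
      = {x : EuclideanSpace ℝ (Fin n) | (inner ℝ x u : ℝ) < a + ε} := by
  ext x
  rw [Metric.mem_thickening_iff]
  constructor
  · rintro ⟨y, hy, hd⟩
    have h1 : (inner ℝ x u : ℝ) - inner ℝ y u = inner ℝ (x - y) u := by rw [inner_sub_left]
    have h2 : (inner ℝ (x - y) u : ℝ) ≤ ‖x - y‖ * ‖u‖ := real_inner_le_norm _ _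
    rw [hu, mul_one] at h2
    have h3 : ‖x - y‖ = dist x y := (dist_eq_norm x y).symm
    have : (inner ℝ x u : ℝ) ≤ inner ℝ y u + dist x y := by linarith [h1 ▸ h2, h3 ▸ h2]
    calc (inner ℝ x u : ℝ) ≤ inner ℝ y u + dist x y := by
          have := real_inner_le_norm (x - y) u
          rw [hu, mul_one, ← dist_eq_norm] at this
          rw [inner_sub_left] at this
          linarith
      _ < a + ε := add_lt_add_of_le_of_lt hy hd
  · intro hx
    have hx' : (inner ℝ x u : ℝ) < a + ε := hx
    set t := max ((inner ℝ x u : ℝ) - a) 0 with ht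
    refine ⟨x - t • u, ?_, ?_⟩
    · show (inner ℝ (x - t • u) u : ℝ) ≤ a
      rw [inner_sub_left, real_inner_smul_left, real_inner_self_eq_norm_sq, hu]
      have h4 : (inner ℝ x u : ℝ) - a ≤ t := le_max_left _ _
      simp only [one_pow, mul_one]
      linarith
    · rw [dist_eq_norm]
      have : x - (x - t • u) = t • u := by abel
      rw [this, norm_smul, hu, mul_one, Real.norm_eq_abs, abs_of_nonneg (le_max_right _ _)]
      rw [ht]
      exact max_lt (by linarith) hε


lemma lintegral_Iic_gaussPdf (t : ℝ) :
    ∫⁻ x in Iic t, ENNReal.ofReal (gaussPdf x) = ENNReal.ofReal (gaussCdf t) := by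
  rw [gaussCdf, ← ofReal_integral_eq_lintegral_ofReal gaussPdf_integrable.restrict
    (by filter_upwards with x using gaussPdf_nonneg x)]

lemma gaussCdf_nonneg (t : ℝ) : 0 ≤ gaussCdf t :=
  setIntegral_nonneg measurableSet_Iic fun x _ => gaussPdf_nonneg x

lemma hasDerivAt_gaussCdf (a : ℝ) : HasDerivAt gaussCdf (gaussPdf a) a := by
  have hInt : ∀ b c : ℝ, IntervalIntegrable gaussPdf volume b c :=
    fun b c => gaussPdf_integrable.intervalIntegrable
  have hd : HasDerivAt (fun t => gaussCdf a + ∫ x in a..t, gaussPdf x) (gaussPdf a) a := by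
    have := intervalIntegral.integral_hasDerivAt_right (hInt a a)
      gaussPdf_continuous.stronglyMeasurable.stronglyMeasurableAtFilter
      gaussPdf_continuous.continuousAt
    exact this.const_add (gaussCdf a)
  refine hd.congr_of_eventuallyEq (Eventually.of_forall fun t => ?_)
  show gaussCdf t = gaussCdf a + ∫ x in a..t, gaussPdf x
  rw [← intervalIntegral.integral_Iic_sub_Iic
    gaussPdf_integrable.integrableOn gaussPdf_integrable.integrableOn]
  show gaussCdf t = gaussCdf a + (gaussCdf t - gaussCdf a)
  ring

/-- For the half-space `H_a = {x : ⟨x,u⟩ ≤ a}` (with `|u| = 1`), the Gaussian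
measure is `γ_n(H_a) = Φ(a)` and the Gaussian boundary measure
`γ_n⁺(H_a) = liminf_{ε→0⁺} (γ_n((H_a)_ε) − γ_n(H_a))/ε` equals `φ(a)`. -/
theorem gaussian_halfspace_measure_and_perimeter (n : ℕ)
    (u : EuclideanSpace ℝ (Fin n)) (hu : ‖u‖ = 1) (a : ℝ) :
    gaussianMeasureN n {x | inner ℝ x u ≤ a} = ENNReal.ofReal (gaussCdf a) ∧
    Filter.liminf
      (fun ε : ℝ =>
        ((gaussianMeasureN n (Metric.thickening ε {x | inner ℝ x u ≤ a})).toReal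
          - (gaussianMeasureN n {x | inner ℝ x u ≤ a}).toReal) / ε)
      (nhdsWithin 0 (Ioi 0)) = gaussPdf a := by
  have hIic : ∀ t : ℝ, gaussianMeasureN n {x | inner ℝ x u ≤ t} = ENNReal.ofReal (gaussCdf t) := by
    intro t
    have : {x : EuclideanSpace ℝ (Fin n) | inner ℝ x u ≤ t}
        = {x : EuclideanSpace ℝ (Fin n) | (inner ℝ x u : ℝ) ∈ Iic t} := rfl
    rw [this, gaussianMeasureN_inner_mem n u hu (Iic t) measurableSet_Iic,
      lintegral_Iic_gaussPdf]
  have hIio : ∀ t : ℝ, gaussianMeasureN n {x : EuclideanSpace ℝ (Fin n) | (inner ℝ x u : ℝ) < t}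
      = ENNReal.ofReal (gaussCdf t) := by
    intro t
    have : {x : EuclideanSpace ℝ (Fin n) | (inner ℝ x u : ℝ) < t}
        = {x : EuclideanSpace ℝ (Fin n) | (inner ℝ x u : ℝ) ∈ Iio t} := rfl
    rw [this, gaussianMeasureN_inner_mem n u hu (Iio t) measurableSet_Iio,
      setLIntegral_congr Iio_ae_eq_Iic, lintegral_Iic_gaussPdf]
  refine ⟨hIic a, ?_⟩
  have hquot : ∀ ε : ℝ, 0 < ε →
      ((gaussianMeasureN n (Metric.thickening ε {x | inner ℝ x u ≤ a})).toReal
          - (gaussianMeasureN n {x | inner ℝ x u ≤ a}).toReal) / ε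
        = (gaussCdf (a + ε) - gaussCdf a) / ε := by
    intro ε hε
    rw [thickening_halfspace u hu a hε, hIio (a + ε), hIic a,
      ENNReal.toReal_ofReal (gaussCdf_nonneg _), ENNReal.toReal_ofReal (gaussCdf_nonneg _)]
  have hslope : Tendsto (slope gaussCdf a) (𝓝[≠] a) (𝓝 (gaussPdf a)) :=
    hasDerivAt_iff_tendsto_slope.mp (hasDerivAt_gaussCdf a)
  have hg : Tendsto (fun ε : ℝ => a + ε) (𝓝[>] (0:ℝ)) (𝓝[≠] a) := by
    refine tendsto_nhdsWithin_of_tendsto_nhds_of_eventually_within _ ?_ ?_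
    · have : Tendsto (fun ε : ℝ => a + ε) (𝓝 (0:ℝ)) (𝓝 (a + 0)) :=
        (continuous_const.add continuous_id).tendsto 0
      rw [add_zero] at this
      exact this.mono_left nhdsWithin_le_nhds
    · filter_upwards [self_mem_nhdsWithin] with ε (hε : 0 < ε)
      simp only [Set.mem_compl_iff, Set.mem_singleton_iff]
      linarith
  have htend : Tendsto (fun ε : ℝ => (gaussCdf (a + ε) - gaussCdf a) / ε)
      (𝓝[>] (0:ℝ)) (𝓝 (gaussPdf a)) := by
    have := hslope.comp hg
    refine this.congr fun ε => ?_
    simp [slope_def_field, Function.comp]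
  rw [Filter.liminf_congr ?_]
  · exact htend.liminf_eq
  · filter_upwards [self_mem_nhdsWithin] with ε (hε : 0 < ε) using hquot ε hε
end
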